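/- Let V be a valuation domain with quotient field K, and let W₁, W₂ be torsion extensions of V to K(X) with valuations w₁, w₂ and maximal ideals M₁, M₂. Then w₁ < w₂ (i.e., W₁ ∩ K[X] ⊊ W₂ ∩ K[X]) if and only if M₁ ∩ K[X] ⊊ M₂ ∩ (W₁ ∩ K[X]). In this case M₁ ∩ K[X] is a prime non-maximal ideal of the ring W₁ ∩ K[X]. -/

import Mathlib

/-- `W` is a torsion extension of the valuation domain `V` of `K` to `K(X)`. -/
def IsTorsionExt {K : Type*} [Field K] (V : ValuationSubring K)
    (W : ValuationSubring (RatFunc K)) : Prop :=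
  (∀ x : K, RatFunc.C x ∈ W ↔ x ∈ V) ∧
  ∀ φ : RatFunc K, φ ≠ 0 → ∃ (n : ℕ) (c : K), 0 < n ∧ c ≠ 0 ∧
    W.valuation φ ^ n = W.valuation (RatFunc.C c)

/-- The ring `W ∩ K[X]`, as a subring of `K(X)`. -/
noncomputable def polyInter {K : Type*} [Field K] (W : ValuationSubring (RatFunc K)) :
    Subring (RatFunc K) :=
  W.toSubring ⊓ (algebraMap (Polynomial K) (RatFunc K)).range

/-- The ideal `M_W ∩ K[X]` of the ring `W ∩ K[X]`, where `M_W` is the maximal ideal of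
`W`: it consists of the elements of `W ∩ K[X]` of valuation `< 1`. -/
def centerIdeal {K : Type*} [Field K] (W : ValuationSubring (RatFunc K)) :
    Ideal (polyInter W) where
  carrier := {x | W.valuation (x : RatFunc K) < 1}
  zero_mem' := by
    simp only [Set.mem_setOf_eq, ZeroMemClass.coe_zero, map_zero]
    exact zero_lt_one
  add_mem' := by
    intro a b ha hb
    simp only [Set.mem_setOf_eq, AddMemClass.coe_add] at *
    exact lt_of_le_of_lt (W.valuation.map_add _ _) (max_lt ha hb)
  smul_mem' := by
    intro c x hx
    simp only [Set.mem_setOf_eq, smul_eq_mul, MulMemClass.coe_mul, map_mul] at *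
    have hc : W.valuation (c : RatFunc K) ≤ 1 :=
      W.valuation_le_one ⟨(c : RatFunc K), (Subring.mem_inf.mp c.2).1⟩
    calc W.valuation (c : RatFunc K) * W.valuation (x : RatFunc K)
        ≤ 1 * W.valuation (x : RatFunc K) := mul_le_mul' hc le_rfl
      _ = W.valuation (x : RatFunc K) := one_mul _
      _ < 1 := hx



section
variable {K : Type*} [Field K] {V : ValuationSubring K}
  {W W' : ValuationSubring (RatFunc K)}

/-- `1 < w(C c)` transfers between torsion extensions of the same `V`. -/
theorem transfer_gt_one (h : IsTorsionExt V W) (h' : IsTorsionExt V W') {c : K}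
    (hgt : 1 < W.valuation (RatFunc.C c)) : 1 < W'.valuation (RatFunc.C c) := by
  have hc : c ∉ V := fun hc => absurd ((W.valuation_le_one_iff _).mpr ((h.1 c).mpr hc)) (not_le.mpr hgt)
  have : RatFunc.C c ∉ W' := fun hmem => hc ((h'.1 c).mp hmem)
  exact not_le.mp (fun hle => this ((W'.valuation_le_one_iff _).mp hle))

theorem valC_ne_zero (W : ValuationSubring (RatFunc K)) {c : K} (hc : c ≠ 0) :
    W.valuation (RatFunc.C c) ≠ 0 := by
  rw [Valuation.ne_zero_iff]
  exact fun h => hc (by simpa using (map_eq_zero (RatFunc.C (K := K))).mp h)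

theorem valC_inv (W : ValuationSubring (RatFunc K)) (c : K) :
    W.valuation (RatFunc.C c⁻¹) = (W.valuation (RatFunc.C c))⁻¹ := by
  rw [map_inv₀ (RatFunc.C (K := K)), map_inv₀]
end

section
variable {K : Type*} [Field K] {V : ValuationSubring K}
  {W₁ W₂ : ValuationSubring (RatFunc K)}

local notation "emb" => algebraMap (Polynomial K) (RatFunc K)

theorem val_emb_g (W : ValuationSubring (RatFunc K)) (c : K) (f : Polynomial K) (n : ℕ) :
    W.valuation (emb (Polynomial.C c⁻¹ * f ^ n)) =
      (W.valuation (RatFunc.C c))⁻¹ *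
        (W.valuation (emb f)) ^ n := by
  rw [map_mul, map_mul, map_pow, map_pow, RatFunc.algebraMap_C, valC_inv]

/-- L1 : if `W₁ ∩ K[X] ⊆ W₂ ∩ K[X]` then `M₁ ∩ K[X] ⊆ M₂`. -/
theorem L1 (h₁ : IsTorsionExt V W₁) (h₂ : IsTorsionExt V W₂)
    (hle : ∀ f : Polynomial K, emb f ∈ W₁ → emb f ∈ W₂)
    (f : Polynomial K) (hf : W₁.valuation (emb f) < 1) :
    W₂.valuation (emb f) < 1 := by
  by_cases h0 : emb f = 0
  · rw [h0, map_zero]; exact zero_lt_one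
  by_contra hge
  replace hge : 1 ≤ W₂.valuation (emb f) := not_lt.mp hge
  obtain ⟨n, c, hn, hc0, heq⟩ := h₁.2 (emb f) h0
  have hClt : W₁.valuation (RatFunc.C c) < 1 := heq ▸ pow_lt_one₀ zero_le' hf hn.ne'
  have hCne : W₁.valuation (RatFunc.C c) ≠ 0 := valC_ne_zero W₁ hc0
  have hinv1 : 1 < W₁.valuation (RatFunc.C c⁻¹) := by
    rw [valC_inv]; exact (one_lt_inv₀ (zero_lt_iff.mpr hCne)).mpr hClt
  have hinv2 : 1 < W₂.valuation (RatFunc.C c⁻¹) := by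
    have := transfer_gt_one h₁ h₂ (c := c⁻¹) (by rwa [valC_inv] at hinv1 ⊢)
    exact this
  set g := Polynomial.C c⁻¹ * f ^ n with hg
  have hne : (W₁.valuation (emb f)) ^ n ≠ 0 :=
    pow_ne_zero n ((Valuation.ne_zero_iff _).mpr h0)
  have hval1 : W₁.valuation (emb g) = 1 := by
    rw [val_emb_g, ← heq, inv_mul_cancel₀ hne]
  have hmem : emb g ∈ W₂ :=
    hle g ((W₁.valuation_le_one_iff _).mp hval1.le)
  have hle2 : W₂.valuation (emb g) ≤ 1 := (W₂.valuation_le_one_iff _).mpr hmem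
  have hgt2 : 1 < W₂.valuation (emb g) := by
    rw [val_emb_g, ← valC_inv]
    calc 1 < W₂.valuation (RatFunc.C c⁻¹) := hinv2
      _ = W₂.valuation (RatFunc.C c⁻¹) * 1 := (mul_one _).symm
      _ ≤ W₂.valuation (RatFunc.C c⁻¹) * (W₂.valuation (emb f)) ^ n :=
        mul_le_mul_right (one_le_pow₀ hge) _
  exact absurd hle2 (not_le.mpr hgt2)

/-- L2: a witness for strictness of the second inclusion. -/
theorem L2 (h₁ : IsTorsionExt V W₁) (h₂ : IsTorsionExt V W₂)
    {f : Polynomial K} (hf₂ : emb f ∈ W₂) (hf₁ : emb f ∉ W₁) :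
    ∃ g : Polynomial K, emb g ∈ W₁ ∧ W₂.valuation (emb g) < 1 ∧
      ¬ W₁.valuation (emb g) < 1 := by
  have h0 : emb f ≠ 0 := fun h => hf₁ (h ▸ W₁.toSubring.zero_mem)
  have hgt : 1 < W₁.valuation (emb f) :=
    not_le.mp (fun hle => hf₁ ((W₁.valuation_le_one_iff _).mp hle))
  have hle2 : W₂.valuation (emb f) ≤ 1 := (W₂.valuation_le_one_iff _).mpr hf₂
  obtain ⟨n, c, hn, hc0, heq⟩ := h₁.2 (emb f) h0
  have hCgt : 1 < W₁.valuation (RatFunc.C c) := heq ▸ one_lt_pow₀ hgt hn.ne'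
  have hCgt2 : 1 < W₂.valuation (RatFunc.C c) := transfer_gt_one h₁ h₂ hCgt
  have hne : (W₁.valuation (emb f)) ^ n ≠ 0 :=
    pow_ne_zero n ((Valuation.ne_zero_iff _).mpr h0)
  refine ⟨Polynomial.C c⁻¹ * f ^ n, ?_, ?_, ?_⟩
  · exact (W₁.valuation_le_one_iff _).mp
      (le_of_eq (by rw [val_emb_g, ← heq, inv_mul_cancel₀ hne]))
  · rw [val_emb_g]
    calc (W₂.valuation (RatFunc.C c))⁻¹ * (W₂.valuation (emb f)) ^ n
        ≤ (W₂.valuation (RatFunc.C c))⁻¹ * 1 :=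
          mul_le_mul_right (pow_le_one₀ zero_le' hle2) _
      _ = (W₂.valuation (RatFunc.C c))⁻¹ := mul_one _
      _ < 1 := (inv_lt_one₀ (zero_lt_one.trans hCgt2)).mpr hCgt2
  · rw [val_emb_g, ← heq, inv_mul_cancel₀ hne]
    exact lt_irrefl 1

/-- L3: from a witness for the strictness of the ideal inclusion, a witness for the
strictness of the ring inclusion. -/
theorem L3 (h₁ : IsTorsionExt V W₁) (h₂ : IsTorsionExt V W₂)
    {f : Polynomial K} (hf₁ : emb f ∈ W₁)
    (hw₂ : W₂.valuation (emb f) < 1) (hw₁ : ¬ W₁.valuation (emb f) < 1) :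
    ∃ g : Polynomial K, emb g ∈ W₂ ∧ emb g ∉ W₁ := by
  have hval1 : W₁.valuation (emb f) = 1 :=
    le_antisymm ((W₁.valuation_le_one_iff _).mpr hf₁) (not_lt.mp hw₁)
  have h0 : emb f ≠ 0 := fun h => hw₁ (by rw [h, map_zero]; exact zero_lt_one)
  obtain ⟨n, c, hn, hc0, heq⟩ := h₂.2 (emb f) h0
  have hClt : W₂.valuation (RatFunc.C c) < 1 := heq ▸ pow_lt_one₀ zero_le' hw₂ hn.ne'
  have hCne : W₂.valuation (RatFunc.C c) ≠ 0 := valC_ne_zero W₂ hc0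
  have hinv2 : 1 < W₂.valuation (RatFunc.C c⁻¹) := by
    rw [valC_inv]; exact (one_lt_inv₀ (zero_lt_iff.mpr hCne)).mpr hClt
  have hinv1 : 1 < W₁.valuation (RatFunc.C c⁻¹) :=
    transfer_gt_one h₂ h₁ (c := c⁻¹) hinv2
  have hne : (W₂.valuation (emb f)) ^ n ≠ 0 :=
    pow_ne_zero n ((Valuation.ne_zero_iff _).mpr h0)
  refine ⟨Polynomial.C c⁻¹ * f ^ n, ?_, ?_⟩
  · exact (W₂.valuation_le_one_iff _).mp
      (le_of_eq (by rw [val_emb_g, ← heq, inv_mul_cancel₀ hne]))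
  · intro hmem
    have : W₁.valuation (emb (Polynomial.C c⁻¹ * f ^ n)) ≤ 1 :=
      (W₁.valuation_le_one_iff _).mpr hmem
    rw [val_emb_g, ← valC_inv, hval1, one_pow, mul_one] at this
    exact absurd this (not_le.mpr hinv1)

/-- L4: if `M₁ ∩ K[X] ⊆ M₂` then `W₁ ∩ K[X] ⊆ W₂ ∩ K[X]`. -/
theorem L4 (h₁ : IsTorsionExt V W₁) (h₂ : IsTorsionExt V W₂)
    (hM : ∀ f : Polynomial K, W₁.valuation (emb f) < 1 → W₂.valuation (emb f) < 1)
    (f : Polynomial K) (hf₁ : emb f ∈ W₁) : emb f ∈ W₂ := by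
  by_contra hf₂
  have h0 : emb f ≠ 0 := fun h => hf₂ (h ▸ W₂.toSubring.zero_mem)
  have hgt : 1 < W₂.valuation (emb f) :=
    not_le.mp (fun hle => hf₂ ((W₂.valuation_le_one_iff _).mp hle))
  obtain ⟨n, c, hn, hc0, heq⟩ := h₂.2 (emb f) h0
  have hCgt2 : 1 < W₂.valuation (RatFunc.C c) := heq ▸ one_lt_pow₀ hgt hn.ne'
  have hCgt1 : 1 < W₁.valuation (RatFunc.C c) := transfer_gt_one h₂ h₁ hCgt2
  have hval1 : W₁.valuation (emb f) = 1 := by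
    rcases lt_or_eq_of_le ((W₁.valuation_le_one_iff _).mpr hf₁) with h | h
    · exact absurd (hM f h) (not_lt.mpr hgt.le)
    · exact h
  have hlt1 : W₁.valuation (emb (Polynomial.C c⁻¹ * f ^ n)) < 1 := by
    rw [val_emb_g, hval1, one_pow, mul_one]
    exact (inv_lt_one₀ (zero_lt_one.trans hCgt1)).mpr hCgt1
  have hne : (W₂.valuation (emb f)) ^ n ≠ 0 :=
    pow_ne_zero n ((Valuation.ne_zero_iff _).mpr h0)
  have := hM _ hlt1
  rw [val_emb_g, ← heq, inv_mul_cancel₀ hne] at this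
  exact lt_irrefl 1 this

theorem mem_centerIdeal {W : ValuationSubring (RatFunc K)} {x : polyInter W} :
    x ∈ centerIdeal W ↔ W.valuation (x : RatFunc K) < 1 := Iff.rfl

theorem centerIdeal_isPrime (W : ValuationSubring (RatFunc K)) :
    (centerIdeal W).IsPrime := by
  rw [Ideal.isPrime_iff]
  constructor
  · intro h
    have h1 : (1 : polyInter W) ∈ centerIdeal W := h ▸ Submodule.mem_top
    rw [mem_centerIdeal, OneMemClass.coe_one, map_one] at h1
    exact lt_irrefl 1 h1
  · intro x y hxy
    rw [mem_centerIdeal, MulMemClass.coe_mul, map_mul] at hxy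
    rcases lt_or_eq_of_le (W.valuation_le_one ⟨_, (Subring.mem_inf.mp x.2).1⟩) with h | h
    · exact Or.inl h
    · right
      rw [mem_centerIdeal]
      calc W.valuation (y : RatFunc K)
          = W.valuation (x : RatFunc K) * W.valuation (y : RatFunc K) := by
            rw [show W.valuation (x : RatFunc K) = 1 from h, one_mul]
        _ < 1 := hxy

theorem centerIdeal_not_isMaximal (h₁ : IsTorsionExt V W₁) (h₂ : IsTorsionExt V W₂)
    (hle : ∀ f : Polynomial K, emb f ∈ W₁ → emb f ∈ W₂)
    {f : Polynomial K} (hf₁ : emb f ∈ W₁)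
    (hw₂ : W₂.valuation (emb f) < 1) (hw₁ : ¬ W₁.valuation (emb f) < 1) :
    ¬ (centerIdeal W₁).IsMaximal := by
  intro hmax
  set x : polyInter W₁ := ⟨emb f, Subring.mem_inf.mpr ⟨hf₁, ⟨f, rfl⟩⟩⟩ with hxdef
  have hx : x ∉ centerIdeal W₁ := hw₁
  set J : Ideal (polyInter W₁) := centerIdeal W₁ ⊔ Ideal.span {x} with hJdef
  have hxJ : x ∈ J := Ideal.mem_sup_right (Ideal.subset_span rfl)
  have hJne : J ≠ ⊤ := by
    intro htop
    have h1 : (1 : polyInter W₁) ∈ J := htop ▸ Submodule.mem_top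
    obtain ⟨m, hm, z, hz, hsum⟩ := Submodule.mem_sup.mp h1
    obtain ⟨g, hg⟩ := Ideal.mem_span_singleton'.mp hz
    have heq : (m : RatFunc K) + (g : RatFunc K) * emb f = 1 := by
      have h' : ((m + z : polyInter W₁) : RatFunc K) = 1 := by rw [hsum]; rfl
      rw [AddMemClass.coe_add, ← hg, MulMemClass.coe_mul] at h'
      exact h'
    have hmval : W₂.valuation (m : RatFunc K) < 1 := by
      obtain ⟨p, hp⟩ := (Subring.mem_inf.mp m.2).2
      rw [← hp]
      exact L1 h₁ h₂ hle p (by rw [hp]; exact hm)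
    have hgval : W₂.valuation (g : RatFunc K) ≤ 1 := by
      obtain ⟨q, hq⟩ := (Subring.mem_inf.mp g.2).2
      rw [← hq]
      exact (W₂.valuation_le_one_iff _).mpr
        (hle q (by rw [hq]; exact (Subring.mem_inf.mp g.2).1))
    have hsumval : W₂.valuation ((m : RatFunc K) + (g : RatFunc K) * emb f) < 1 := by
      refine lt_of_le_of_lt (W₂.valuation.map_add _ _) (max_lt hmval ?_)
      rw [map_mul]
      calc W₂.valuation (g : RatFunc K) * W₂.valuation (emb f)
          ≤ 1 * W₂.valuation (emb f) := mul_le_mul_left hgval _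
        _ = W₂.valuation (emb f) := one_mul _
        _ < 1 := hw₂
    rw [heq, map_one] at hsumval
    exact lt_irrefl 1 hsumval
  have hIJ : centerIdeal W₁ = J := hmax.eq_of_le hJne le_sup_left
  exact hx (hIJ ▸ hxJ)
end

/-- For torsion extensions `W₁, W₂` of `V` to `K(X)`:
`w₁ < w₂` (i.e. `W₁ ∩ K[X] ⊊ W₂ ∩ K[X]`) iff `M₁ ∩ K[X] ⊊ M₂ ∩ (W₁ ∩ K[X])`; and in
this case `M₁ ∩ K[X]` is a prime, non-maximal ideal of the ring `W₁ ∩ K[X]`. -/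
theorem stmt_6 {K : Type*} [Field K] (V : ValuationSubring K)
    (W₁ W₂ : ValuationSubring (RatFunc K))
    (h₁ : IsTorsionExt V W₁) (h₂ : IsTorsionExt V W₂) :
    (((∀ f : Polynomial K, algebraMap (Polynomial K) (RatFunc K) f ∈ W₁ →
          algebraMap (Polynomial K) (RatFunc K) f ∈ W₂) ∧
        ¬ (∀ f : Polynomial K, algebraMap (Polynomial K) (RatFunc K) f ∈ W₂ →
          algebraMap (Polynomial K) (RatFunc K) f ∈ W₁)) ↔
      ((∀ f : Polynomial K,
          W₁.valuation (algebraMap (Polynomial K) (RatFunc K) f) < 1 →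
          (algebraMap (Polynomial K) (RatFunc K) f ∈ W₁ ∧
            W₂.valuation (algebraMap (Polynomial K) (RatFunc K) f) < 1)) ∧
        ∃ f : Polynomial K, algebraMap (Polynomial K) (RatFunc K) f ∈ W₁ ∧
          W₂.valuation (algebraMap (Polynomial K) (RatFunc K) f) < 1 ∧
          ¬ W₁.valuation (algebraMap (Polynomial K) (RatFunc K) f) < 1)) ∧
    (((∀ f : Polynomial K, algebraMap (Polynomial K) (RatFunc K) f ∈ W₁ →
          algebraMap (Polynomial K) (RatFunc K) f ∈ W₂) ∧
        ¬ (∀ f : Polynomial K, algebraMap (Polynomial K) (RatFunc K) f ∈ W₂ →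
          algebraMap (Polynomial K) (RatFunc K) f ∈ W₁)) →
      (centerIdeal W₁).IsPrime ∧ ¬ (centerIdeal W₁).IsMaximal) := by
  constructor
  · constructor
    · rintro ⟨hle, hnle⟩
      refine ⟨fun f hf =>
        ⟨(W₁.valuation_le_one_iff _).mp hf.le, L1 h₁ h₂ hle f hf⟩, ?_⟩
      obtain ⟨f, hf⟩ := not_forall.mp hnle
      obtain ⟨hf₂, hf₁⟩ := _root_.not_imp.mp hf
      exact L2 h₁ h₂ hf₂ hf₁
    · rintro ⟨hM, f, hf₁, hw₂, hw₁⟩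
      refine ⟨L4 h₁ h₂ (fun g hg => (hM g hg).2), ?_⟩
      intro hall
      obtain ⟨g, hg₂, hg₁⟩ := L3 h₁ h₂ hf₁ hw₂ hw₁
      exact hg₁ (hall g hg₂)
  · rintro ⟨hle, hnle⟩
    refine ⟨centerIdeal_isPrime W₁, ?_⟩
    obtain ⟨f, hf⟩ := not_forall.mp hnle
    obtain ⟨hf₂, hf₁⟩ := _root_.not_imp.mp hf
    obtain ⟨g, hg₁, hgw₂, hgw₁⟩ := L2 h₁ h₂ hf₂ hf₁
    exact centerIdeal_not_isMaximal h₁ h₂ hle hg₁ hgw₂ hgw₁
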